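/- Let A be a nonempty set, N ≥ 2, and let F : A → ℝ and G_i : A → ℝ, i = 2, …, N, be nonnegative functions. Suppose there exists C ∈ ℝ such that for every λ = (λ_2, …, λ_N) ∈ (0, ∞)^{N−1} one has inf_{a ∈ A} ( F(a) + ∑_{i=2}^N λ_i G_i(a) ) ≤ C. Let (λ^n)_{n≥1} be a sequence in (0, ∞)^{N−1} with λ_i^n nondecreasing in n and λ_i^n → ∞ as n → ∞ for each i, let (ε^n)_{n≥1} be a nonincreasing sequence of nonnegative reals with ε^n → 0, and let a^n ∈ A satisfy F(a^n) + ∑_{i=2}^N λ_i^n G_i(a^n) ≤ inf_{a ∈ A} ( F(a) + ∑_{i=2}^N λ_i^n G_i(a) ) + ε^n for every n. Then lim_{n → ∞} ∑_{i=2}^N λ_i^n G_i(a^n) = 0. -/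
import Mathlib


open Filter

/-- Abstract penalization lemma: if the penalized infima are uniformly bounded by some `C`
over all positive weight vectors, the weights `λ^n` increase to infinity, `ε^n` decreases
to `0`, and `a^n` is `ε^n`-optimal for the `λ^n`-penalized problem, then the total penalty
`∑ i λ_i^n G_i(a^n)` tends to `0`. -/
theorem stmt_11 {A : Type*} [Nonempty A] (N : ℕ) (hN : 2 ≤ N)
    (F : A → ℝ) (G : Fin (N - 1) → A → ℝ)
    (hF : ∀ a, 0 ≤ F a) (hG : ∀ i a, 0 ≤ G i a)
    (hC : ∃ C : ℝ, ∀ lam : Fin (N - 1) → ℝ, (∀ i, 0 < lam i) →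
      (⨅ a : A, (F a + ∑ i, lam i * G i a)) ≤ C)
    (lam : ℕ → Fin (N - 1) → ℝ)
    (hlampos : ∀ n i, 0 < lam n i)
    (hlammono : ∀ i, Monotone fun n => lam n i)
    (hlamtop : ∀ i, Tendsto (fun n => lam n i) atTop atTop)
    (eps : ℕ → ℝ)
    (hepsnn : ∀ n, 0 ≤ eps n)
    (hepsanti : Antitone eps)
    (hepslim : Tendsto eps atTop (nhds 0))
    (a : ℕ → A)
    (hopt : ∀ n, F (a n) + ∑ i, lam n i * G i (a n) ≤
      (⨅ b : A, (F b + ∑ i, lam n i * G i b)) + eps n) :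
    Tendsto (fun n => ∑ i, lam n i * G i (a n)) atTop (nhds 0) := by
  obtain ⟨C, hC⟩ := hC
  set v : (Fin (N - 1) → ℝ) → ℝ := fun l => ⨅ b : A, (F b + ∑ i, l i * G i b) with hv
  have hbdd : ∀ l : Fin (N - 1) → ℝ, (∀ i, 0 ≤ l i) →
      BddBelow (Set.range fun b : A => F b + ∑ i, l i * G i b) := by
    intro l hl
    refine ⟨0, ?_⟩
    rintro x ⟨b, rfl⟩
    exact add_nonneg (hF b) (Finset.sum_nonneg fun i _ => mul_nonneg (hl i) (hG i b))
  have hmono : ∀ l m : Fin (N - 1) → ℝ, (∀ i, 0 ≤ l i) → (∀ i, l i ≤ m i) → v l ≤ v m := by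
    intro l m hl hlm
    refine ciInf_mono (hbdd l hl) fun b => ?_
    gcongr with i hi
    · exact hG i b
    · exact hlm i
  -- half weights
  set w : ℕ → ℝ := fun n => v (fun i => lam n i / 2) with hw
  have hhalfpos : ∀ n i, (0:ℝ) < lam n i / 2 := fun n i => half_pos (hlampos n i)
  have hvle : ∀ n, v (lam n) ≤ C := fun n => hC (lam n) (hlampos n)
  have hwlev : ∀ n, w n ≤ v (lam n) := fun n =>
    hmono _ _ (fun i => (hhalfpos n i).le) (fun i => by
      have := (hlampos n i).le; linarith)
  have hvmono : Monotone fun n => v (lam n) := fun m n hmn =>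
    hmono _ _ (fun i => (hlampos m i).le) (fun i => hlammono i hmn)
  have hwmono : Monotone w := fun m n hmn =>
    hmono _ _ (fun i => (hhalfpos m i).le) (fun i => by
      have := hlammono i hmn; dsimp at this ⊢; linarith)
  have hvbdd : BddAbove (Set.range fun n => v (lam n)) := ⟨C, by rintro x ⟨n, rfl⟩; exact hvle n⟩
  set L : ℝ := ⨆ n, v (lam n) with hL
  have hvL : Tendsto (fun n => v (lam n)) atTop (nhds L) := tendsto_atTop_ciSup hvmono hvbdd
  have hwbdd : BddAbove (Set.range w) :=
    ⟨L, by rintro x ⟨n, rfl⟩; exact (hwlev n).trans (le_ciSup hvbdd n)⟩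
  have hsupw : (⨆ n, w n) = L := by
    refine le_antisymm (ciSup_le fun n => (hwlev n).trans (le_ciSup hvbdd n)) ?_
    refine ciSup_le fun m => ?_
    -- find n with 2 * lam m i ≤ lam n i for all i
    have hev : ∀ᶠ n in atTop, ∀ i, 2 * lam m i ≤ lam n i := by
      rw [eventually_all]
      intro i
      exact (hlamtop i).eventually_ge_atTop (2 * lam m i)
    obtain ⟨n, hn⟩ := hev.exists
    have : v (lam m) ≤ w n :=
      hmono _ _ (fun i => (hlampos m i).le) (fun i => by have := hn i; linarith)
    exact this.trans (le_ciSup hwbdd n)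
  have hwL : Tendsto w atTop (nhds L) := hsupw ▸ tendsto_atTop_ciSup hwmono hwbdd
  -- the bounding sequence
  have hbound : ∀ n, ∑ i, lam n i * G i (a n) ≤ 2 * (v (lam n) + eps n - w n) := by
    intro n
    have h1 : F (a n) + ∑ i, lam n i * G i (a n) ≤ v (lam n) + eps n := hopt n
    have h2 : w n ≤ F (a n) + ∑ i, (lam n i / 2) * G i (a n) :=
      ciInf_le (hbdd _ fun i => (hhalfpos n i).le) (a n)
    have h3 : ∑ i, (lam n i / 2) * G i (a n) = (∑ i, lam n i * G i (a n)) / 2 := by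
      rw [Finset.sum_div]
      exact Finset.sum_congr rfl fun i _ => by ring
    rw [h3] at h2
    linarith
  have hnn : ∀ n, (0:ℝ) ≤ ∑ i, lam n i * G i (a n) := fun n =>
    Finset.sum_nonneg fun i _ => mul_nonneg (hlampos n i).le (hG i (a n))
  have htend : Tendsto (fun n => 2 * (v (lam n) + eps n - w n)) atTop (nhds 0) := by
    have : Tendsto (fun n => 2 * (v (lam n) + eps n - w n)) atTop
        (nhds (2 * (L + 0 - L))) := (((hvL.add hepslim).sub hwL).const_mul 2)
    simpa using this
  exact tendsto_of_tendsto_of_tendsto_of_le_of_le tendsto_const_nhds htend hnn hbound
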